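/- arXiv:2206.03028 — 4 statements merged into one kernel-verified Lean document; each statement's English description precedes it below -/
import Mathlib

section
/- For every A_l-module X and all indices i,j,k,l ∈ I, the composite ĉ_{ikl} ∘ ĉ_{ijk} : G_{ij}G_{jk}G_{kl}(X) → G_{il}(X) (where ĉ_{ijk} is taken for the A_k-module G_{kl}(X)) is given by multiplication by G_{il}^{-1}(c_{ijk} · c_{ikl}) on X; explicitly, for all m ∈ X: G_{il}^{-1}(c_{ikl}) · ( G_{kl}^{-1}(G_{ik}^{-1}(c_{ijk})) · m ) = G_{il}^{-1}(c_{ijk} c_{ikl}) · m. -/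
/-- For every `A_l`-module `X` and all indices `i,j,k,l ∈ I`, the composite
`ĉ_{ikl} ∘ ĉ_{ijk} : G_{ij}G_{jk}G_{kl}(X) → G_{il}(X)` is given by multiplication by
`G_{il}⁻¹(c_{ijk} · c_{ikl})` on `X`; explicitly, for all `m ∈ X`:
`G_{il}⁻¹(c_{ikl}) • (G_{kl}⁻¹(G_{ik}⁻¹(c_{ijk})) • m) = G_{il}⁻¹(c_{ijk} c_{ikl}) • m`. -/
theorem gerbe_morphism_comp
    {R : Type*} [CommRing R] {I : Type*} (A : I → Type*)
    [∀ i, Ring (A i)] [∀ i, Algebra R (A i)]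
    (G : ∀ i j : I, A j ≃ₐ[R] A i) (c : ∀ i j k : I, (A i)ˣ)
    (hG : ∀ (i j k : I) (a : A k),
      G i j (G j k a) = (c i j k : A i) * G i k a * (((c i j k)⁻¹ : (A i)ˣ) : A i))
    (hc : ∀ i j k l : I,
      (c i j k : A i) * (c i k l : A i) = G i j (c j k l : A j) * (c i j l : A i))
    (i j k l : I) (X : Type*) [AddCommGroup X] [Module (A l) X]
    (m : X) :
    (G i l).symm ((c i k l : A i)) • ((G k l).symm ((G i k).symm ((c i j k : A i))) • m)
      = (G i l).symm ((c i j k : A i) * (c i k l : A i)) • m := by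
  rw [smul_smul]
  congr 1
  apply (G i l).injective
  have h := hG i k l ((G k l).symm ((G i k).symm (c i j k : A i)))
  rw [AlgEquiv.apply_symm_apply, AlgEquiv.apply_symm_apply] at h
  rw [map_mul, AlgEquiv.apply_symm_apply, AlgEquiv.apply_symm_apply]
  conv_rhs => rw [h]
  rw [Units.inv_mul_cancel_right]
end

section
/- The gerbe-twisted cup product is well defined and associative: let E_a, E_b, E_c, E_d be modules over A_a, A_b, A_c, A_d respectively, u : G_{ab}(E_b) → E_a an A_a-module homomorphism, v : G_{bc}(E_c) → E_b an A_b-module homomorphism and w : G_{cd}(E_d) → E_c an A_c-module homomorphism, and define u ∪_c v := u ∘ G_{ab}(v) ∘ ĉ_{abc}^{-1} (a map G_{ac}(E_c) → E_a, where G_{ab}(v) is the underlying map of v regarded as a map G_{ab}G_{bc}(E_c) → G_{ab}(E_b)). Then u ∪_c v is an A_a-module homomorphism, and (u ∪_c v) ∪_c w = u ∪_c (v ∪_c w) as maps G_{ad}(E_d) → E_a. -/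
/-- The gerbe-twisted cup product `u ∪_c v := u ∘ G_{ab}(v) ∘ ĉ_{abc}⁻¹`
of intertwining module maps is well defined (an `A_a`-module homomorphism) and associative. -/
theorem gerbe_cup_product_assoc
    {R : Type*} [CommRing R] {I : Type*} (A : I → Type*)
    [∀ i, Ring (A i)] [∀ i, Algebra R (A i)]
    (G : ∀ i j : I, A j ≃ₐ[R] A i) (co : ∀ i j k : I, (A i)ˣ)
    (hG : ∀ (i j k : I) (a : A k),
      G i j (G j k a) = (co i j k : A i) * G i k a * (((co i j k)⁻¹ : (A i)ˣ) : A i))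
    (hc : ∀ i j k l : I,
      (co i j k : A i) * (co i k l : A i) = G i j (co j k l : A j) * (co i j l : A i))
    (a b c d : I)
    (Ea : Type*) [AddCommGroup Ea] [Module (A a) Ea]
    (Eb : Type*) [AddCommGroup Eb] [Module (A b) Eb]
    (Ec : Type*) [AddCommGroup Ec] [Module (A c) Ec]
    (Ed : Type*) [AddCommGroup Ed] [Module (A d) Ed]
    (u : Eb → Ea) (v : Ec → Eb) (w : Ed → Ec)
    (hu_add : ∀ m m' : Eb, u (m + m') = u m + u m')
    (hu_lin : ∀ (x : A a) (m : Eb), u ((G a b).symm x • m) = x • u m)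
    (hv_add : ∀ m m' : Ec, v (m + m') = v m + v m')
    (hv_lin : ∀ (x : A b) (m : Ec), v ((G b c).symm x • m) = x • v m)
    (hw_add : ∀ m m' : Ed, w (m + m') = w m + w m')
    (hw_lin : ∀ (x : A c) (m : Ed), w ((G c d).symm x • m) = x • w m) :
    -- `u ∪_c v` is additive
    (∀ m m' : Ec,
        u (v ((G a c).symm ((((co a b c)⁻¹ : (A a)ˣ) : A a)) • (m + m')))
          = u (v ((G a c).symm ((((co a b c)⁻¹ : (A a)ˣ) : A a)) • m))
            + u (v ((G a c).symm ((((co a b c)⁻¹ : (A a)ˣ) : A a)) • m')))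
    -- `u ∪_c v` is an `A_a`-module homomorphism `G_{ac}(E_c) → E_a`
    ∧ (∀ (x : A a) (m : Ec),
        u (v ((G a c).symm ((((co a b c)⁻¹ : (A a)ˣ) : A a)) • ((G a c).symm x • m)))
          = x • u (v ((G a c).symm ((((co a b c)⁻¹ : (A a)ˣ) : A a)) • m)))
    -- associativity `(u ∪_c v) ∪_c w = u ∪_c (v ∪_c w)` as maps `G_{ad}(E_d) → E_a`
    ∧ (∀ m : Ed,
        u (v ((G a c).symm ((((co a b c)⁻¹ : (A a)ˣ) : A a)) •
              w ((G a d).symm ((((co a c d)⁻¹ : (A a)ˣ) : A a)) • m)))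
          = u (v (w ((G b d).symm ((((co b c d)⁻¹ : (A b)ˣ) : A b)) •
              ((G a d).symm ((((co a b d)⁻¹ : (A a)ˣ) : A a)) • m))))) := by
 
  -- abbreviations
  have conj : ∀ (i j k : I) (y : A i),
      (G i k) ((G j k).symm ((G i j).symm y))
        = (((co i j k)⁻¹ : (A i)ˣ) : A i) * y * (co i j k : A i) := by
    intro i j k y
    have h := hG i j k ((G j k).symm ((G i j).symm y))
    rw [AlgEquiv.apply_symm_apply, AlgEquiv.apply_symm_apply] at h
    symm
    conv_lhs => rw [h]
    simp [mul_assoc]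
  refine ⟨?_, ?_, ?_⟩
  · intro m m'
    rw [smul_add, hv_add, hu_add]
  · intro x m
    have key : (G a c).symm ((((co a b c)⁻¹ : (A a)ˣ) : A a)) * (G a c).symm x
        = (G b c).symm ((G a b).symm x)
            * (G a c).symm ((((co a b c)⁻¹ : (A a)ˣ) : A a)) := by
      apply (G a c).injective
      rw [map_mul, map_mul, AlgEquiv.apply_symm_apply, AlgEquiv.apply_symm_apply, conj]
      rw [Units.mul_inv_cancel_right]
    rw [← mul_smul, key, mul_smul, hv_lin, hu_lin]
  · intro m
    -- the unit `G_{ab}(c_{bcd})`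
    set gb : (A a)ˣ :=
      Units.map ((G a b : A b →ₐ[R] A a) : A b →* A a) (co b c d) with hgb
    have hgbc : (gb : A a) = G a b (co b c d : A b) := rfl
    have hgbi : ((gb⁻¹ : (A a)ˣ) : A a)
        = G a b ((((co b c d)⁻¹ : (A b)ˣ) : A b)) := by
      rw [← map_inv (Units.map ((G a b : A b →ₐ[R] A a) : A b →* A a))]
      rfl
    have hcu : co a b c * co a c d = gb * co a b d := by
      ext
      push_cast [hgbc]
      exact hc a b c d
    have hinv : ((co a c d)⁻¹ * (co a b c)⁻¹ : (A a)ˣ)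
        = (co a b d)⁻¹ * gb⁻¹ := by
      rw [← mul_inv_rev, ← mul_inv_rev, hcu]
    -- express both sides via G_{ad}
    have key1 : (G c d).symm ((G a c).symm ((((co a b c)⁻¹ : (A a)ˣ) : A a)))
          * (G a d).symm ((((co a c d)⁻¹ : (A a)ˣ) : A a))
        = (G b d).symm ((((co b c d)⁻¹ : (A b)ˣ) : A b))
          * (G a d).symm ((((co a b d)⁻¹ : (A a)ˣ) : A a)) := by
      apply (G a d).injective
      rw [map_mul, map_mul, AlgEquiv.apply_symm_apply, AlgEquiv.apply_symm_apply,
        conj a c d]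
      have h2 : (G a d) ((G b d).symm ((((co b c d)⁻¹ : (A b)ˣ) : A b)))
          = (((co a b d)⁻¹ : (A a)ˣ) : A a) * ((gb⁻¹ : (A a)ˣ) : A a)
              * (co a b d : A a) := by
        have := conj a b d ((gb⁻¹ : (A a)ˣ) : A a)
        rw [hgbi, AlgEquiv.symm_apply_apply] at this
        exact this
      rw [h2]
      rw [Units.mul_inv_cancel_right, Units.mul_inv_cancel_right]
      exact_mod_cast congrArg (Units.val) hinv
    rw [← hw_lin, ← mul_smul, key1, mul_smul]
end

section
/- Leibniz rule for the gerbe-twisted product: let E, E'', E' be ℤ-graded modules over A_c, A_b, A_a respectively, equipped with A_c-, A_b-, A_a-linear endomorphisms δ, δ'', δ' of degree 1. Let μ : G_{ab}(E'') → E' be an A_a-module map homogeneous of degree m and ν : G_{bc}(E) → E'' an A_b-module map homogeneous of degree n. Set dμ := δ' ∘ μ − (−1)^m μ ∘ δ'', dν := δ'' ∘ ν − (−1)^n ν ∘ δ, and d(μ ∪_c ν) := δ' ∘ (μ ∪_c ν) − (−1)^{m+n} (μ ∪_c ν) ∘ δ, where μ ∪_c ν := μ ∘ G_{ab}(ν)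 ∘ ĉ_{abc}^{-1}. Then d(μ ∪_c ν) = (dμ) ∪_c ν + (−1)^m μ ∪_c (dν). -/
/-- Leibniz rule for the gerbe-twisted product: for ℤ-graded modules
`E` (over `A_c`), `E''` (over `A_b`), `E'` (over `A_a`) with degree-1 linear endomorphisms
`δ, δ'', δ'`, an `A_a`-module map `μ : G_{ab}(E'') → E'` homogeneous of degree `m` and an
`A_b`-module map `ν : G_{bc}(E) → E''` homogeneous of degree `n`, one has
`d(μ ∪_c ν) = (dμ) ∪_c ν + (−1)^m μ ∪_c (dν)`. -/
theorem gerbe_cup_leibniz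
    {R : Type*} [CommRing R] {I : Type*} (A : I → Type*)
    [∀ i, Ring (A i)] [∀ i, Algebra R (A i)]
    (G : ∀ i j : I, A j ≃ₐ[R] A i) (co : ∀ i j k : I, (A i)ˣ)
    (hG : ∀ (i j k : I) (a : A k),
      G i j (G j k a) = (co i j k : A i) * G i k a * (((co i j k)⁻¹ : (A i)ˣ) : A i))
    (hc : ∀ i j k l : I,
      (co i j k : A i) * (co i k l : A i) = G i j (co j k l : A j) * (co i j l : A i))
    (a b c : I)
    -- the graded modules E (over A_c), E'' (over A_b), E' (over A_a)
    (E : Type*) [AddCommGroup E] [Module (A c) E]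
    (E'' : Type*) [AddCommGroup E''] [Module (A b) E'']
    (E' : Type*) [AddCommGroup E'] [Module (A a) E']
    (grE : ℤ → AddSubgroup E) (grE'' : ℤ → AddSubgroup E'') (grE' : ℤ → AddSubgroup E')
    (hgrE : DirectSum.IsInternal grE) (hgrE'' : DirectSum.IsInternal grE'')
    (hgrE' : DirectSum.IsInternal grE')
    -- degree-1 linear endomorphisms
    (δ : E → E) (δ'' : E'' → E'') (δ' : E' → E')
    (hδ_add : ∀ x y, δ (x + y) = δ x + δ y)
    (hδ_lin : ∀ (h : A c) (x : E), δ (h • x) = h • δ x)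
    (hδ_deg : ∀ k : ℤ, ∀ x ∈ grE k, δ x ∈ grE (k + 1))
    (hδ''_add : ∀ x y, δ'' (x + y) = δ'' x + δ'' y)
    (hδ''_lin : ∀ (h : A b) (x : E''), δ'' (h • x) = h • δ'' x)
    (hδ''_deg : ∀ k : ℤ, ∀ x ∈ grE'' k, δ'' x ∈ grE'' (k + 1))
    (hδ'_add : ∀ x y, δ' (x + y) = δ' x + δ' y)
    (hδ'_lin : ∀ (h : A a) (x : E'), δ' (h • x) = h • δ' x)
    (hδ'_deg : ∀ k : ℤ, ∀ x ∈ grE' k, δ' x ∈ grE' (k + 1))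
    -- μ : G_{ab}(E'') → E' homogeneous of degree m, ν : G_{bc}(E) → E'' homogeneous of degree n
    (m n : ℤ) (μ : E'' → E') (ν : E → E'')
    (hμ_add : ∀ x y, μ (x + y) = μ x + μ y)
    (hμ_lin : ∀ (h : A a) (x : E''), μ ((G a b).symm h • x) = h • μ x)
    (hμ_deg : ∀ k : ℤ, ∀ x ∈ grE'' k, μ x ∈ grE' (k + m))
    (hν_add : ∀ x y, ν (x + y) = ν x + ν y)
    (hν_lin : ∀ (h : A b) (x : E), ν ((G b c).symm h • x) = h • ν x)
    (hν_deg : ∀ k : ℤ, ∀ x ∈ grE k, ν x ∈ grE'' (k + n)) :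
    ∀ x : E,
      -- d(μ ∪_c ν) x
      δ' (μ (ν ((G a c).symm ((((co a b c)⁻¹ : (A a)ˣ) : A a)) • x)))
        - ((((-1 : (ℤ)ˣ) ^ (m + n) : (ℤ)ˣ) : ℤ)) •
            μ (ν ((G a c).symm ((((co a b c)⁻¹ : (A a)ˣ) : A a)) • δ x))
      = -- (dμ) ∪_c ν x
        (δ' (μ (ν ((G a c).symm ((((co a b c)⁻¹ : (A a)ˣ) : A a)) • x)))
          - ((((-1 : (ℤ)ˣ) ^ m : (ℤ)ˣ) : ℤ)) •
              μ (δ'' (ν ((G a c).symm ((((co a b c)⁻¹ : (A a)ˣ) : A a)) • x))))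
        + -- (−1)^m • (μ ∪_c (dν)) x
        ((((-1 : (ℤ)ˣ) ^ m : (ℤ)ˣ) : ℤ)) •
          μ (δ'' (ν ((G a c).symm ((((co a b c)⁻¹ : (A a)ˣ) : A a)) • x))
              - ((((-1 : (ℤ)ˣ) ^ n : (ℤ)ˣ) : ℤ)) •
                  ν (δ ((G a c).symm ((((co a b c)⁻¹ : (A a)ˣ) : A a)) • x))) := by
  intro x
  rw [hδ_lin]
  have μsub : ∀ u v, μ (u - v) = μ u - μ v := fun u v =>
    map_sub (AddMonoidHom.mk' μ hμ_add) u v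
  have μz : ∀ (z : ℤ) (v : E''), μ (z • v) = z • μ v := fun z v =>
    map_zsmul (AddMonoidHom.mk' μ hμ_add) z v
  rw [μsub, μz, smul_sub, smul_smul]
  have hz : ((((-1 : (ℤ)ˣ) ^ (m + n) : (ℤ)ˣ)) : ℤ)
      = ((((-1 : (ℤ)ˣ) ^ m : (ℤ)ˣ)) : ℤ) * ((((-1 : (ℤ)ˣ) ^ n : (ℤ)ˣ)) : ℤ) := by
    rw [zpow_add]; push_cast; ring
  rw [hz]
  abel
end

section
/- Decomposition formula for the gerbe-twisted multilinear product M: for all 0 ≤ p < q ≤ k and all elements y_r, z_r ∈ A_r (r = 0, …, k), one has M_{(k,k−1,…,0)}( y_k z_k ⊗ y_{k−1} z_{k−1} ⊗ ⋯ ⊗ y_0 z_0 ) = M_{(k,…,q+1,q,p,p−1,…,0)}( y_k z_k ⊗ ⋯ ⊗ y_{q+1} z_{q+1} ⊗ y_q ⊗ W·z_p ⊗ y_{p−1} z_{p−1} ⊗ ⋯ ⊗ y_0 z_0 ), where the outer product is taken along the index sequence (k, k−1, …, q+1, q, p, p−1, …, 0), the slot of index q receives y_q, the slot of index p receives W·z_p,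 and W := M_{(q,q−1,…,p)}( z_q ⊗ y_{q−1} z_{q−1} ⊗ ⋯ ⊗ y_{p+1} z_{p+1} ⊗ y_p ) ∈ A_p. -/
section

variable {R : Type} [CommRing R] {A : ℕ → Type} [∀ i, Ring (A i)] [∀ i, Algebra R (A i)]

/-- The gerbe-twisted product `M_{(i_0,…,i_m)}(u_0 ⊗ ⋯ ⊗ u_m)` along a (decreasing) list of
slots `[(i_0,u_0), …, (i_{m−1},u_{m−1})]` with base value `last = u_m ∈ A b`:
`G_{b,i_0}(u_0) · c_{b,i_1,i_0}⁻¹ · G_{b,i_1}(u_1) ⋯ c_{b,i_{m−1},i_{m−2}}⁻¹ · G_{b,i_{m−1}}(u_{m−1}) · u_m`. -/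
def Mprod (G : ∀ i j : ℕ, A j →ₐ[R] A i) (c : ∀ i j l : ℕ, (A i)ˣ) (b : ℕ) (last : A b) :
    List ((i : ℕ) × A i) → A b
  | [] => last
  | [⟨i, u⟩] => G b i u * last
  | ⟨i, u⟩ :: ⟨j, v⟩ :: rest =>
      G b i u * (((c b j i)⁻¹ : (A b)ˣ) : A b) * Mprod G c b last (⟨j, v⟩ :: rest)

/-- The decreasing list of indices `[a, a−1, …, b]` (empty when `b > a`). -/
def descIdx (a b : ℕ) : List ℕ := ((List.range (a + 1 - b)).map (fun t => b + t)).reverse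

/-! ### Auxiliary lemmas -/

lemma descIdx_append (a b m : ℕ) (h1 : b ≤ m + 1) (h2 : m ≤ a) :
    descIdx a b = descIdx a (m + 1) ++ descIdx m b := by
  unfold descIdx
  rw [show a + 1 - b = (m + 1 - b) + (a - m) by omega, List.range_add, List.map_append,
    List.reverse_append, List.map_map]
  congr 2
  · rw [show a + 1 - (m + 1) = a - m by omega]
    apply List.map_congr_left
    intro t ht
    simp only [Function.comp_apply]
    omega

lemma descIdx_cons (a b : ℕ) (h1 : 1 ≤ b) (h2 : b ≤ a) :
    descIdx a b = a :: descIdx (a - 1) b := by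
  unfold descIdx
  rw [show a + 1 - b = (a - b) + 1 by omega, List.range_succ, List.map_append,
    List.reverse_append]
  simp only [List.map_cons, List.map_nil, List.reverse_cons, List.reverse_nil, List.nil_append]
  rw [show b + (a - b) = a by omega, show a - 1 + 1 - b = a - b by omega]
  rfl

lemma descIdx_nil (a b : ℕ) (h : a < b) : descIdx a b = [] := by
  unfold descIdx
  rw [show a + 1 - b = 0 by omega]
  rfl

lemma descIdx_self (b : ℕ) : descIdx b b = [b] := by
  unfold descIdx
  rw [show b + 1 - b = 1 by omega]
  simp [List.range_succ]

lemma descIdx_concat (a b : ℕ) (h : b ≤ a) :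
    descIdx a b = descIdx a (b + 1) ++ [b] := by
  rw [descIdx_append a b b (Nat.le_succ b) h, descIdx_self]

variable (G : ∀ i j : ℕ, A j →ₐ[R] A i) (c : ∀ i j l : ℕ, (A i)ˣ)

lemma Mprod_nil (b : ℕ) (last : A b) : Mprod G c b last [] = last := rfl

lemma Mprod_singleton (b : ℕ) (last : A b) (i : ℕ) (u : A i) :
    Mprod G c b last [⟨i, u⟩] = G b i u * last := rfl

lemma Mprod_cons_cons (b : ℕ) (last : A b) (i : ℕ) (u : A i) (j : ℕ) (v : A j)
    (rest : List ((i : ℕ) × A i)) :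
    Mprod G c b last (⟨i, u⟩ :: ⟨j, v⟩ :: rest)
      = G b i u * (((c b j i)⁻¹ : (A b)ˣ) : A b) * Mprod G c b last (⟨j, v⟩ :: rest) := rfl

/-- The last index of a slot list, with default value. -/
def lstIdx : ℕ → List ((i : ℕ) × A i) → ℕ
  | i, [] => i
  | _, ⟨a, _⟩ :: t => lstIdx a t

omit [∀ i, Ring (A i)] [∀ i, Algebra R (A i)] in
lemma lstIdx_concat (a : ℕ) (w : A a) :
    ∀ (L : List ((i : ℕ) × A i)) (i : ℕ), lstIdx (A := A) i (L ++ [⟨a, w⟩]) = a := by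
  intro L
  induction L with
  | nil => intro i; rfl
  | cons hd tl ih => obtain ⟨x, u⟩ := hd; intro i; exact ih x

/-- Chain condition: the indices `i, i_0, i_1, …` decrease weakly and stay `≥ j`. -/
def OkChain (j : ℕ) : ℕ → List ((i : ℕ) × A i) → Prop
  | i, [] => j ≤ i
  | i, ⟨a, _⟩ :: t => a ≤ i ∧ OkChain j a t

omit [∀ i, Ring (A i)] [∀ i, Algebra R (A i)] in
lemma OkChain.le {j : ℕ} :
    ∀ {L : List ((i : ℕ) × A i)} {i : ℕ}, OkChain (A := A) j i L → j ≤ i := by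
  intro L
  induction L with
  | nil => intro i h; exact h
  | cons hd tl ih =>
    obtain ⟨a, w⟩ := hd
    intro i h
    exact (ih h.2).trans h.1

omit [∀ i, Ring (A i)] [∀ i, Algebra R (A i)] in
lemma OkChain_descIdx (j : ℕ) (v : ∀ r : ℕ, A r) :
    ∀ (a : ℕ) (b i : ℕ), j ≤ b → 1 ≤ b → a ≤ i → j ≤ i →
      OkChain (A := A) j i ((descIdx a b).map (fun r => ⟨r, v r⟩)) := by
  intro a
  induction a using Nat.strong_induction_on with
  | _ a ih =>
    intro b i hjb h1b hai hji
    by_cases hba : b ≤ a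
    · rw [descIdx_cons a b h1b hba, List.map_cons]
      refine ⟨hai, ?_⟩
      exact ih (a - 1) (by omega) b a hjb h1b (by omega) (hjb.trans hba)
    · rw [descIdx_nil a b (by omega)]
      exact hji

omit [∀ i, Ring (A i)] [∀ i, Algebra R (A i)] in
lemma lstIdx_descIdx (v : ∀ r : ℕ, A r) (a b i : ℕ) (hba : b ≤ a) :
    lstIdx (A := A) i ((descIdx a b).map (fun r => ⟨r, v r⟩)) = b := by
  rw [descIdx_concat a b hba, List.map_append, List.map_cons, List.map_nil, lstIdx_concat]

lemma Mprod_one_mul (b : ℕ) (last : A b) (L : List ((i : ℕ) × A i)) :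
    Mprod G c b last L = Mprod G c b 1 L * last := by
  induction L with
  | nil => simp [Mprod_nil]
  | cons hd tl ih =>
    obtain ⟨i, u⟩ := hd
    cases tl with
    | nil => simp [Mprod_singleton]
    | cons hd2 tl2 =>
      obtain ⟨j, v⟩ := hd2
      rw [Mprod_cons_cons, Mprod_cons_cons, ih, ← mul_assoc]

lemma Mprod_split (b j : ℕ) (v : A j) (T : List ((i : ℕ) × A i)) :
    ∀ (L1 : List ((i : ℕ) × A i)) (i : ℕ) (u : A i),
    Mprod G c b 1 (⟨i, u⟩ :: (L1 ++ ⟨j, v⟩ :: T))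
      = Mprod G c b 1 (⟨i, u⟩ :: L1) * (((c b j (lstIdx i L1))⁻¹ : (A b)ˣ) : A b)
          * Mprod G c b 1 (⟨j, v⟩ :: T) := by
  intro L1
  induction L1 with
  | nil =>
    intro i u
    rw [List.nil_append, Mprod_cons_cons, Mprod_singleton, lstIdx, mul_one]
  | cons hd tl ih =>
    obtain ⟨a, w⟩ := hd
    intro i u
    rw [List.cons_append, Mprod_cons_cons, ih a w, Mprod_cons_cons]
    show _ = _ * ((c b j (lstIdx a tl))⁻¹ : (A b)ˣ).val * _
    simp only [mul_assoc]

lemma Mprod_dup (b i : ℕ) (hc : c b i i = 1) (u v : A i) (L : List ((i : ℕ) × A i)) :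
    Mprod G c b 1 (⟨i, u * v⟩ :: L) = Mprod G c b 1 (⟨i, u⟩ :: ⟨i, v⟩ :: L) := by
  cases L with
  | nil => simp [Mprod_singleton, Mprod_cons_cons, hc, mul_assoc]
  | cons hd tl =>
    obtain ⟨a, w⟩ := hd
    rw [Mprod_cons_cons, Mprod_cons_cons, Mprod_cons_cons, hc]
    simp [mul_assoc]

lemma Mprod_split_append (b : ℕ) (Hi : List ((i : ℕ) × A i)) (i : ℕ) (u : A i)
    (j : ℕ) (v : A j) (T : List ((i : ℕ) × A i)) :
    Mprod G c b 1 (Hi ++ ⟨i, u⟩ :: ⟨j, v⟩ :: T)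
      = Mprod G c b 1 (Hi ++ [⟨i, u⟩]) * (((c b j i)⁻¹ : (A b)ˣ) : A b)
          * Mprod G c b 1 (⟨j, v⟩ :: T) := by
  cases Hi with
  | nil =>
    rw [List.nil_append, List.nil_append, Mprod_cons_cons, Mprod_singleton, mul_one]
  | cons hd Hi' =>
    obtain ⟨x, w⟩ := hd
    have h1 : (⟨x, w⟩ :: Hi' : List ((i : ℕ) × A i)) ++ ⟨i, u⟩ :: ⟨j, v⟩ :: T
        = ⟨x, w⟩ :: ((Hi' ++ [⟨i, u⟩]) ++ ⟨j, v⟩ :: T) := by simp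
    have h2 : (⟨x, w⟩ :: Hi' : List ((i : ℕ) × A i)) ++ [⟨i, u⟩]
        = ⟨x, w⟩ :: (Hi' ++ [⟨i, u⟩]) := by simp
    rw [h1, h2, Mprod_split, lstIdx_concat]

lemma Mprod_dup_append (b i : ℕ) (hc : c b i i = 1) (u v : A i) :
    ∀ (Hi : List ((i : ℕ) × A i)) (T : List ((i : ℕ) × A i)),
    Mprod G c b 1 (Hi ++ ⟨i, u * v⟩ :: T) = Mprod G c b 1 (Hi ++ ⟨i, u⟩ :: ⟨i, v⟩ :: T) := by
  intro Hi
  induction Hi with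
  | nil => intro T; exact Mprod_dup G c b i hc u v T
  | cons hd Hi' ih =>
    obtain ⟨x, w⟩ := hd
    intro T
    cases Hi' with
    | nil =>
      rw [List.cons_append, List.nil_append, List.cons_append, List.nil_append,
        Mprod_cons_cons, Mprod_cons_cons, Mprod_dup G c b i hc u v T]
    | cons hd2 Hi'' =>
      obtain ⟨x2, w2⟩ := hd2
      rw [List.cons_append, List.cons_append, List.cons_append, List.cons_append,
        Mprod_cons_cons, Mprod_cons_cons, ← List.cons_append, ← List.cons_append, ih T]

lemma Mprod_base_change
    (hconj : ∀ i j l : ℕ, i ≤ j → j ≤ l → ∀ x : A l,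
      G i j (G j l x) = (c i j l : A i) * G i l x * (((c i j l)⁻¹ : (A i)ˣ) : A i))
    (hcc : ∀ i j l m : ℕ, i ≤ j → j ≤ l → l ≤ m →
      (c i j l : A i) * (c i l m : A i) = G i j (c j l m : A j) * (c i j m : A i))
    (b j : ℕ) (hbj : b ≤ j) :
    ∀ (L : List ((i : ℕ) × A i)) (i : ℕ) (u : A i), OkChain j i L →
    G b j (Mprod G c j 1 (⟨i, u⟩ :: L))
      = (c b j i : A b) * Mprod G c b 1 (⟨i, u⟩ :: L)
          * (((c b j (lstIdx i L))⁻¹ : (A b)ˣ) : A b) := by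
  intro L
  induction L with
  | nil =>
    intro i u hok
    rw [Mprod_singleton, Mprod_singleton, map_mul, map_one, mul_one,
      hconj b j i hbj hok, lstIdx, mul_one]
  | cons hd tl ih =>
    obtain ⟨a, w⟩ := hd
    intro i u hok
    obtain ⟨hai, hok'⟩ := hok
    have hja : j ≤ a := hok'.le
    have hji : j ≤ i := hja.trans hai
    rw [Mprod_cons_cons, map_mul, map_mul, ih a w hok', Mprod_cons_cons]
    have hval : G b j ((c j a i : A j))
        = (c b j a : A b) * (c b a i : A b) * (((c b j i)⁻¹ : (A b)ˣ) : A b) := by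
      have h := hcc b j a i hbj hja hai
      rw [h, mul_assoc, Units.mul_inv, mul_one]
    have hu2 : G b j (((c j a i)⁻¹ : (A j)ˣ) : A j) * G b j ((c j a i : A j)) = 1 := by
      rw [← map_mul, Units.inv_mul, map_one]
    have hGX : G b j ((c j a i : A j)) *
        ((c b j i : A b) * (((c b a i)⁻¹ : (A b)ˣ) : A b) * (((c b j a)⁻¹ : (A b)ˣ) : A b))
        = 1 := by
      rw [hval]
      simp only [mul_assoc, Units.inv_mul_cancel_left, Units.mul_inv_cancel_left, Units.mul_inv]
    have hinv : G b j (((c j a i)⁻¹ : (A j)ˣ) : A j)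
        = (c b j i : A b) * (((c b a i)⁻¹ : (A b)ˣ) : A b) * (((c b j a)⁻¹ : (A b)ˣ) : A b) := by
      calc G b j (((c j a i)⁻¹ : (A j)ˣ) : A j)
          = G b j (((c j a i)⁻¹ : (A j)ˣ) : A j) * (G b j ((c j a i : A j)) *
            ((c b j i : A b) * (((c b a i)⁻¹ : (A b)ˣ) : A b)
              * (((c b j a)⁻¹ : (A b)ˣ) : A b))) := by
            rw [hGX, mul_one]
        _ = _ := by rw [← mul_assoc, hu2, one_mul]
    rw [hinv, hconj b j i hbj hji]
    have hlst : lstIdx i (⟨a, w⟩ :: tl) = lstIdx a tl := rfl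
    rw [hlst]
    simp only [mul_assoc, Units.inv_mul_cancel_left, Units.mul_inv_cancel_left]

/-- Decomposition formula for the gerbe-twisted multilinear product `M`:
for `0 ≤ p < q ≤ k` and `y_r, z_r ∈ A_r`,
`M_{(k,…,0)}(y_k z_k ⊗ ⋯ ⊗ y_0 z_0)
  = M_{(k,…,q+1,q,p,…,0)}(y_k z_k ⊗ ⋯ ⊗ y_{q+1} z_{q+1} ⊗ y_q ⊗ W·z_p ⊗ y_{p−1}z_{p−1} ⊗ ⋯ ⊗ y_0 z_0)`
where `W = M_{(q,…,p)}(z_q ⊗ y_{q−1}z_{q−1} ⊗ ⋯ ⊗ y_{p+1}z_{p+1} ⊗ y_p)`. -/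
theorem Mprod_decomposition
    (G : ∀ i j : ℕ, A j →ₐ[R] A i) (c : ∀ i j l : ℕ, (A i)ˣ)
    (hGid : ∀ (i : ℕ) (x : A i), G i i x = x)
    (hconj : ∀ i j l : ℕ, i ≤ j → j ≤ l → ∀ x : A l,
      G i j (G j l x) = (c i j l : A i) * G i l x * (((c i j l)⁻¹ : (A i)ˣ) : A i))
    (hciil : ∀ i l : ℕ, i ≤ l → c i i l = 1)
    (hcill : ∀ i l : ℕ, i ≤ l → c i l l = 1)
    (hcc : ∀ i j l m : ℕ, i ≤ j → j ≤ l → l ≤ m →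
      (c i j l : A i) * (c i l m : A i) = G i j (c j l m : A j) * (c i j m : A i))
    (k p q : ℕ) (hpq : p < q) (hqk : q ≤ k)
    (y z : ∀ r : ℕ, A r) :
    Mprod G c 0 (y 0 * z 0)
        ((descIdx k 1).map (fun r => (⟨r, y r * z r⟩ : (i : ℕ) × A i)))
      = (if hp : p = 0 then
          Mprod G c 0
            ((cast (congrArg A hp)
                (Mprod G c p (y p)
                  (⟨q, z q⟩ ::
                    (descIdx (q - 1) (p + 1)).map (fun r => (⟨r, y r * z r⟩ : (i : ℕ) × A i)))))
              * z 0)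
            (((descIdx k (q + 1)).map (fun r => (⟨r, y r * z r⟩ : (i : ℕ) × A i)))
              ++ [⟨q, y q⟩])
        else
          Mprod G c 0 (y 0 * z 0)
            (((descIdx k (q + 1)).map (fun r => (⟨r, y r * z r⟩ : (i : ℕ) × A i)))
              ++ [⟨q, y q⟩,
                  ⟨p, (Mprod G c p (y p)
                        (⟨q, z q⟩ ::
                          (descIdx (q - 1) (p + 1)).map
                            (fun r => (⟨r, y r * z r⟩ : (i : ℕ) × A i)))) * z p⟩]
              ++ (descIdx (p - 1) 1).map (fun r => (⟨r, y r * z r⟩ : (i : ℕ) × A i)))) := by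
  have h1q : 1 ≤ q := by omega
  have hcqq : c 0 q q = 1 := hcill 0 q (Nat.zero_le q)
  by_cases hp0 : p = 0
  · subst hp0
    rw [dif_pos rfl]
    simp only [cast_eq, Nat.zero_add]
    rw [descIdx_append k 1 q (by omega) (by omega), descIdx_cons q 1 le_rfl h1q]
    simp only [List.map_append, List.map_cons]
    conv_rhs => rw [Mprod_one_mul]
    rw [Mprod_one_mul G c 0 (y 0), Mprod_one_mul G c 0 (y 0 * z 0)]
    rw [Mprod_dup_append G c 0 q hcqq (y q) (z q), Mprod_split_append, hcqq]
    simp only [inv_one, Units.val_one, mul_one, mul_assoc]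
  · rw [dif_neg hp0]
    have h1p : 1 ≤ p := by omega
    have hcpp : c 0 p p = 1 := hcill 0 p (Nat.zero_le p)
    rw [descIdx_append k 1 q (by omega) (by omega), descIdx_cons q 1 le_rfl h1q,
      descIdx_append (q - 1) 1 p (by omega) (by omega), descIdx_cons p 1 le_rfl h1p]
    simp only [List.map_append, List.map_cons, List.append_assoc, List.cons_append,
      List.nil_append]
    conv_rhs => rw [Mprod_one_mul]
    rw [Mprod_one_mul G c p (y p), Mprod_one_mul G c 0 (y 0 * z 0)]
    congr 1
    -- last index of the W-list tail is p+1
    have hlst : lstIdx q ((descIdx (q - 1) (p + 1)).map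
        (fun r => (⟨r, y r * z r⟩ : (i : ℕ) × A i))) = p + 1 := by
      by_cases hq1 : p + 1 ≤ q - 1
      · exact lstIdx_descIdx _ _ _ _ hq1
      · rw [descIdx_nil _ _ (by omega), List.map_nil]
        show q = p + 1
        omega
    have hok : OkChain p q ((descIdx (q - 1) (p + 1)).map
        (fun r => (⟨r, y r * z r⟩ : (i : ℕ) × A i))) :=
      OkChain_descIdx p _ (q - 1) (p + 1) q (by omega) (by omega) (by omega) (by omega)
    have hcore :
        Mprod G c 0 1 (⟨q, z q⟩ :: ((descIdx (q - 1) (p + 1)).map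
            (fun r => (⟨r, y r * z r⟩ : (i : ℕ) × A i))
              ++ ⟨p, y p * z p⟩ :: (descIdx (p - 1) 1).map
                (fun r => (⟨r, y r * z r⟩ : (i : ℕ) × A i))))
          = (((c 0 p q)⁻¹ : (A 0)ˣ) : A 0)
              * Mprod G c 0 1
                (⟨p, (Mprod G c p 1 (⟨q, z q⟩ :: (descIdx (q - 1) (p + 1)).map
                    (fun r => (⟨r, y r * z r⟩ : (i : ℕ) × A i))) * y p) * z p⟩ ::
                  (descIdx (p - 1) 1).map (fun r => (⟨r, y r * z r⟩ : (i : ℕ) × A i))) := by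
      rw [Mprod_split, hlst]
      rw [Mprod_dup G c 0 p hcpp (y p) (z p),
        Mprod_dup G c 0 p hcpp
          (Mprod G c p 1 (⟨q, z q⟩ :: (descIdx (q - 1) (p + 1)).map
            (fun r => (⟨r, y r * z r⟩ : (i : ℕ) × A i))) * y p) (z p)]
      rw [Mprod_cons_cons, Mprod_cons_cons, hcpp, map_mul,
        Mprod_base_change G c hconj hcc 0 p (Nat.zero_le p) _ q (z q) hok, hlst]
      simp only [inv_one, Units.val_one, mul_one, mul_assoc, Units.inv_mul_cancel_left]
    rw [Mprod_dup_append G c 0 q hcqq (y q) (z q), Mprod_split_append, Mprod_split_append,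
      hcqq]
    simp only [inv_one, Units.val_one, mul_one]
    rw [hcore]
    simp only [mul_assoc]

end
end
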